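/- Let ℓ > 0, φₖ(z) = (√(2ℓ)/(kπ)) sin(kπz/ℓ) for k ≥ 1, φ₋₁(z) = 1/√2, and φ₀(z) = (z/ℓ - 1/2)/√(1/ℓ + 1/2). Then {φ₋₁, φ₀, φ₁, φ₂, …} is an orthonormal system with respect to the inner product ⟨h₁,h₂⟩_X = h₁(0)h₂(0) + h₁(ℓ)h₂(ℓ) + ∫₀^ℓ h₁'(z) h₂'(z) dz. -/

import Mathlib

open Real intervalIntegral

/-- The modified `H¹(0,ℓ)`-inner product
`⟨h₁,h₂⟩_X = h₁(0)h₂(0) + h₁(ℓ)h₂(ℓ) + ∫₀^ℓ h₁' h₂'`. -/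
noncomputable def innerX (ℓ : ℝ) (h₁ h₂ : ℝ → ℝ) : ℝ :=
  h₁ 0 * h₂ 0 + h₁ ℓ * h₂ ℓ + ∫ z in (0:ℝ)..ℓ, deriv h₁ z * deriv h₂ z

/-- The basis functions `φ₋₁(z) = 1/√2`,
`φ₀(z) = (z/ℓ - 1/2)/√(1/ℓ + 1/2)`, and
`φₖ(z) = (√(2ℓ)/(kπ)) sin(kπz/ℓ)` for `k ≥ 1`. -/
noncomputable def phi (ℓ : ℝ) : ℤ → ℝ → ℝ
  | -1 => fun _ => 1 / Real.sqrt 2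
  | 0 => fun z => (z / ℓ - 1 / 2) / Real.sqrt (1 / ℓ + 1 / 2)
  | (k : ℕ) => fun z => Real.sqrt (2 * ℓ) / (k * π) * Real.sin (k * π * z / ℓ)
  | _ => fun _ => 0

lemma phi_neg1 (ℓ : ℝ) : phi ℓ (-1) = fun _ => 1 / Real.sqrt 2 := rfl

lemma phi_zero (ℓ : ℝ) :
    phi ℓ 0 = fun z => (z / ℓ - 1 / 2) / Real.sqrt (1 / ℓ + 1 / 2) := rfl

lemma phi_nat (ℓ : ℝ) (k : ℕ) (hk : 1 ≤ k) :
    phi ℓ (k : ℤ) = fun z =>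
      Real.sqrt (2 * ℓ) / ((k:ℝ) * π) * Real.sin ((k:ℝ) * π / ℓ * z) := by
  obtain ⟨n, rfl⟩ := Nat.exists_eq_add_of_le' hk
  funext z
  show Real.sqrt (2 * ℓ) / (((n+1:ℕ):ℝ) * π) * Real.sin (((n+1:ℕ):ℝ) * π * z / ℓ) = _
  push_cast
  ring_nf

lemma deriv_phi_neg1 (ℓ : ℝ) (z : ℝ) : deriv (phi ℓ (-1)) z = 0 := by
  rw [phi_neg1]; exact deriv_const _ _

lemma deriv_phi_zero (ℓ : ℝ) (z : ℝ) :
    deriv (phi ℓ 0) z = 1 / ℓ / Real.sqrt (1 / ℓ + 1 / 2) := by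
  rw [phi_zero]
  have h : HasDerivAt (fun z : ℝ => (z / ℓ - 1 / 2) / Real.sqrt (1 / ℓ + 1 / 2))
      (1 / ℓ / Real.sqrt (1 / ℓ + 1 / 2)) z := by
    have := (((hasDerivAt_id z).div_const ℓ).sub_const (1/2)).div_const
      (Real.sqrt (1 / ℓ + 1 / 2))
    simpa using this
  exact h.deriv

lemma deriv_phi_nat (ℓ : ℝ) (hℓ : 0 < ℓ) (k : ℕ) (hk : 1 ≤ k) (z : ℝ) :
    deriv (phi ℓ (k : ℤ)) z = Real.sqrt (2 * ℓ) / ℓ * Real.cos ((k:ℝ) * π / ℓ * z) := by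
  rw [phi_nat ℓ k hk]
  set A := Real.sqrt (2 * ℓ)
  set B := (k:ℝ) * π / ℓ
  have hB : HasDerivAt (fun z : ℝ => B * z) B z := by
    simpa using (hasDerivAt_id z).const_mul B
  have h : HasDerivAt (fun z => A / ((k:ℝ) * π) * Real.sin (B * z))
      (A / ((k:ℝ) * π) * (Real.cos (B * z) * B)) z := (hB.sin).const_mul _
  rw [h.deriv]
  have hkπ : (k:ℝ) * π ≠ 0 := by
    positivity -- may fail; fallback below
  field_simp [B]
  have hBl : B * ℓ = (k:ℝ) * π := div_mul_cancel₀ _ hℓ.ne'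
  linear_combination A * Real.cos (B * z) * hBl

lemma int_cos_mul (a b : ℝ) (ha : a ≠ 0) :
    ∫ x in (0:ℝ)..b, Real.cos (a * x) = Real.sin (a * b) / a := by
  rw [intervalIntegral.integral_comp_mul_left (fun x => Real.cos x) ha, integral_cos]
  simp [smul_eq_mul, div_eq_inv_mul]

lemma int_coscos (ℓ : ℝ) (hℓ : 0 < ℓ) (k m : ℕ) (hk : 1 ≤ k) (hm : 1 ≤ m) :
    ∫ z in (0:ℝ)..ℓ, Real.cos ((k:ℝ) * π / ℓ * z) * Real.cos ((m:ℝ) * π / ℓ * z)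
      = if k = m then ℓ / 2 else 0 := by
  have hℓ' : ℓ ≠ 0 := hℓ.ne'
  by_cases hkm : k = m
  · subst hkm
    simp only [if_true]
    have hB : (k:ℝ) * π / ℓ ≠ 0 := by
      have : (0:ℝ) < k := by exact_mod_cast hk
      positivity
    have : ∀ z : ℝ, Real.cos ((k:ℝ) * π / ℓ * z) * Real.cos ((k:ℝ) * π / ℓ * z)
        = (fun x => Real.cos x ^ 2) (((k:ℝ) * π / ℓ) * z) := by
      intro z; simp [pow_two]
    simp_rw [this]
    rw [intervalIntegral.integral_comp_mul_left (fun x => Real.cos x ^ 2) hB,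
      integral_cos_sq]
    have h1 : (k:ℝ) * π / ℓ * ℓ = (k:ℝ) * π := by field_simp
    have h2 : Real.sin ((k:ℝ) * π) = 0 := Real.sin_nat_mul_pi k
    rw [h1, h2]
    simp only [mul_zero, zero_mul, Real.sin_zero, Real.cos_zero, mul_zero]
    simp only [smul_eq_mul, mul_zero, zero_mul, sub_zero, zero_add]
    have hkpi : (k:ℝ) * π ≠ 0 := by
      have : (0:ℝ) < k := by exact_mod_cast hk
      positivity
    field_simp
  · simp only [hkm, if_false]
    set a := (k:ℝ) * π / ℓ
    set b := (m:ℝ) * π / ℓ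
    have hid : ∀ z : ℝ, Real.cos (a * z) * Real.cos (b * z)
        = Real.cos ((a - b) * z) / 2 + Real.cos ((a + b) * z) / 2 := by
      intro z
      have h := Real.two_mul_cos_mul_cos (a * z) (b * z)
      have h1 : a * z - b * z = (a - b) * z := by ring
      have h2 : a * z + b * z = (a + b) * z := by ring
      rw [h1, h2] at h
      linarith
    simp_rw [hid]
    have hab1 : a - b ≠ 0 := by
      simp only [a, b, div_sub_div_same, div_ne_zero_iff, sub_ne_zero]
      constructor
      · intro h
        exact hkm (by exact_mod_cast mul_right_cancel₀ Real.pi_ne_zero h)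
      · exact hℓ'
    have hab2 : a + b ≠ 0 := by
      have ha : 0 < a := by
        have : (0:ℝ) < k := by exact_mod_cast hk
        positivity
      have hb : 0 < b := by
        have : (0:ℝ) < m := by exact_mod_cast hm
        positivity
      positivity
    have i1 : IntervalIntegrable (fun z => Real.cos ((a - b) * z) / 2) MeasureTheory.volume 0 ℓ :=
      (((Real.continuous_cos.comp (continuous_const.mul continuous_id)).div_const 2).intervalIntegrable _ _)
    have i2 : IntervalIntegrable (fun z => Real.cos ((a + b) * z) / 2) MeasureTheory.volume 0 ℓ :=
      (((Real.continuous_cos.comp (continuous_const.mul continuous_id)).div_const 2).intervalIntegrable _ _)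
    rw [intervalIntegral.integral_add i1 i2]
    have e1 : ∫ z in (0:ℝ)..ℓ, Real.cos ((a - b) * z) / 2
        = (Real.sin ((a - b) * ℓ) / (a - b)) / 2 := by
      rw [intervalIntegral.integral_div, int_cos_mul _ _ hab1]
    have e2 : ∫ z in (0:ℝ)..ℓ, Real.cos ((a + b) * z) / 2
        = (Real.sin ((a + b) * ℓ) / (a + b)) / 2 := by
      rw [intervalIntegral.integral_div, int_cos_mul _ _ hab2]
    have s1 : Real.sin ((a - b) * ℓ) = 0 := by
      have h1 : a - b = ((k:ℝ) - (m:ℝ)) * π / ℓ := by simp only [a, b]; ring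
      have h2 : (a - b) * ℓ = (((k:ℤ) - (m:ℤ) : ℤ) : ℝ) * π := by
        rw [h1, div_mul_cancel₀ _ hℓ']; push_cast; ring
      rw [h2]
      exact Real.sin_int_mul_pi _
    have s2 : Real.sin ((a + b) * ℓ) = 0 := by
      have h1 : a + b = ((k:ℝ) + (m:ℝ)) * π / ℓ := by simp only [a, b]; ring
      have h2 : (a + b) * ℓ = ((k + m : ℕ) : ℝ) * π := by
        rw [h1, div_mul_cancel₀ _ hℓ']; push_cast; ring
      rw [h2]
      exact Real.sin_nat_mul_pi _
    rw [e1, e2, s1, s2]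
    simp

lemma innerX_symm (ℓ : ℝ) (f g : ℝ → ℝ) : innerX ℓ f g = innerX ℓ g f := by
  unfold innerX
  simp_rw [mul_comm (deriv f _)]
  ring_nf

lemma int_tri (i : ℤ) (h : -1 ≤ i) : i = -1 ∨ i = 0 ∨ ∃ k : ℕ, 1 ≤ k ∧ i = (k:ℤ) := by
  rcases lt_or_ge i 1 with h1 | h1
  · omega
  · exact Or.inr (Or.inr ⟨i.toNat, by omega, by omega⟩)

lemma sqrt_c_pos (ℓ : ℝ) (hℓ : 0 < ℓ) : 0 < Real.sqrt (1 / ℓ + 1 / 2) :=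
  Real.sqrt_pos.mpr (by positivity)

-- ⟨φ₋₁, φ₋₁⟩ = 1
lemma case_nn (ℓ : ℝ) (hℓ : 0 < ℓ) : innerX ℓ (phi ℓ (-1)) (phi ℓ (-1)) = 1 := by
  unfold innerX
  simp_rw [deriv_phi_neg1, mul_zero, intervalIntegral.integral_zero]
  rw [phi_neg1]
  have : (1 / Real.sqrt 2) * (1 / Real.sqrt 2) = 1 / 2 := by
    rw [div_mul_div_comm, one_mul, Real.mul_self_sqrt (by norm_num)]
  rw [this]; ring

-- ⟨φ₋₁, φ₀⟩ = 0
lemma case_nz (ℓ : ℝ) (hℓ : 0 < ℓ) : innerX ℓ (phi ℓ (-1)) (phi ℓ 0) = 0 := by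
  unfold innerX
  simp_rw [deriv_phi_neg1, zero_mul, intervalIntegral.integral_zero]
  rw [phi_neg1, phi_zero]
  have h0 : (0:ℝ) / ℓ = 0 := zero_div ℓ
  have hl : ℓ / ℓ = 1 := div_self hℓ.ne'
  simp only [h0, hl]
  ring

-- ⟨φ₋₁, φₖ⟩ = 0
lemma case_nk (ℓ : ℝ) (hℓ : 0 < ℓ) (k : ℕ) (hk : 1 ≤ k) :
    innerX ℓ (phi ℓ (-1)) (phi ℓ (k:ℤ)) = 0 := by
  unfold innerX
  simp_rw [deriv_phi_neg1, zero_mul, intervalIntegral.integral_zero]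
  rw [phi_nat ℓ k hk]
  have h1 : (k:ℝ) * π / ℓ * 0 = 0 := by ring
  have h2 : (k:ℝ) * π / ℓ * ℓ = (k:ℝ) * π := by field_simp
  simp only [h1, h2, Real.sin_zero, Real.sin_nat_mul_pi]
  ring

-- ⟨φ₀, φ₀⟩ = 1
lemma case_zz (ℓ : ℝ) (hℓ : 0 < ℓ) : innerX ℓ (phi ℓ 0) (phi ℓ 0) = 1 := by
  unfold innerX
  simp_rw [deriv_phi_zero]
  rw [intervalIntegral.integral_const, phi_zero]
  have hc := sqrt_c_pos ℓ hℓ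
  set c := Real.sqrt (1 / ℓ + 1 / 2) with hc0
  have hc2 : c ^ 2 = 1 / ℓ + 1 / 2 := Real.sq_sqrt (by positivity)
  have hcne : c ≠ 0 := hc.ne'
  have hlne : ℓ ≠ 0 := hℓ.ne'
  have key : (0 / ℓ - 1 / 2) / c * ((0 / ℓ - 1 / 2) / c)
      + (ℓ / ℓ - 1 / 2) / c * ((ℓ / ℓ - 1 / 2) / c)
      + (ℓ - 0) • (1 / ℓ / c * (1 / ℓ / c)) = (1 / 2 + 1 / ℓ) / c ^ 2 := by
    rw [smul_eq_mul]
    field_simp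
    ring
  rw [key, hc2, add_comm (1/ℓ : ℝ)]
  exact div_self (by positivity)

-- ⟨φ₀, φₖ⟩ = 0
lemma case_zk (ℓ : ℝ) (hℓ : 0 < ℓ) (k : ℕ) (hk : 1 ≤ k) :
    innerX ℓ (phi ℓ 0) (phi ℓ (k:ℤ)) = 0 := by
  unfold innerX
  have hend : ∀ z : ℝ, phi ℓ (k:ℤ) z
      = Real.sqrt (2 * ℓ) / ((k:ℝ) * π) * Real.sin ((k:ℝ) * π / ℓ * z) := by
    rw [phi_nat ℓ k hk]; intro z; rfl
  have h1 : (k:ℝ) * π / ℓ * 0 = 0 := by ring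
  have h2 : (k:ℝ) * π / ℓ * ℓ = (k:ℝ) * π := by field_simp
  rw [hend 0, hend ℓ, h1, h2]
  simp only [Real.sin_zero, Real.sin_nat_mul_pi, mul_zero, zero_mul, add_zero, mul_zero]
  simp_rw [deriv_phi_zero, deriv_phi_nat ℓ hℓ k hk]
  rw [intervalIntegral.integral_const_mul]
  have hB : (k:ℝ) * π / ℓ ≠ 0 := by
    have : (0:ℝ) < k := by exact_mod_cast hk
    positivity
  simp_rw [mul_comm (Real.sqrt (2 * ℓ) / ℓ)]
  rw [intervalIntegral.integral_mul_const, int_cos_mul _ _ hB, h2,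
    Real.sin_nat_mul_pi]
  ring

-- ⟨φₖ, φₘ⟩
lemma case_km (ℓ : ℝ) (hℓ : 0 < ℓ) (k m : ℕ) (hk : 1 ≤ k) (hm : 1 ≤ m) :
    innerX ℓ (phi ℓ (k:ℤ)) (phi ℓ (m:ℤ)) = if k = m then 1 else 0 := by
  unfold innerX
  have hend : ∀ (n : ℕ), 1 ≤ n → ∀ z : ℝ, phi ℓ (n:ℤ) z
      = Real.sqrt (2 * ℓ) / ((n:ℝ) * π) * Real.sin ((n:ℝ) * π / ℓ * z) := by
    intro n hn z; rw [phi_nat ℓ n hn]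
  have h1 : ∀ n : ℕ, (n:ℝ) * π / ℓ * 0 = 0 := by intro n; ring
  have h2 : ∀ n : ℕ, (n:ℝ) * π / ℓ * ℓ = (n:ℝ) * π := by intro n; field_simp
  rw [hend k hk 0, hend k hk ℓ, hend m hm 0, hend m hm ℓ, h1, h2, h1, h2]
  simp only [Real.sin_zero, Real.sin_nat_mul_pi, mul_zero, zero_mul, add_zero, zero_add, mul_zero]
  simp_rw [deriv_phi_nat ℓ hℓ k hk, deriv_phi_nat ℓ hℓ m hm]
  have : ∀ z : ℝ, Real.sqrt (2 * ℓ) / ℓ * Real.cos ((k:ℝ) * π / ℓ * z) *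
      (Real.sqrt (2 * ℓ) / ℓ * Real.cos ((m:ℝ) * π / ℓ * z))
      = (Real.sqrt (2 * ℓ) / ℓ) ^ 2 *
        (Real.cos ((k:ℝ) * π / ℓ * z) * Real.cos ((m:ℝ) * π / ℓ * z)) := by
    intro z; ring
  simp_rw [this]
  rw [intervalIntegral.integral_const_mul, int_coscos ℓ hℓ k m hk hm]
  have hs : Real.sqrt (2 * ℓ) ^ 2 = 2 * ℓ := Real.sq_sqrt (by positivity)
  by_cases hkm : k = m
  · simp only [hkm, if_true]
    rw [div_pow, hs]
    field_simp
  · simp [hkm]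


/-- `{φ₋₁, φ₀, φ₁, φ₂, …}` is an orthonormal system with respect to the
modified inner product `⟨·,·⟩_X`. -/
theorem phi_orthonormal (ℓ : ℝ) (hℓ : 0 < ℓ) :
    ∀ i j : ℤ, -1 ≤ i → -1 ≤ j →
      innerX ℓ (phi ℓ i) (phi ℓ j) = if i = j then 1 else 0 := by
  intro i j hi hj
  rcases int_tri i hi with rfl | rfl | ⟨k, hk, rfl⟩ <;>
    rcases int_tri j hj with rfl | rfl | ⟨m, hm, rfl⟩
  · simp [case_nn ℓ hℓ]
  · simp [case_nz ℓ hℓ]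
  · rw [case_nk ℓ hℓ m hm]
    have : ¬ (-1 : ℤ) = (m:ℤ) := by omega
    simp [this]
  · rw [innerX_symm, case_nz ℓ hℓ]; simp
  · simp [case_zz ℓ hℓ]
  · rw [case_zk ℓ hℓ m hm]
    have : ¬ (0 : ℤ) = (m:ℤ) := by omega
    simp [this]
  · rw [innerX_symm, case_nk ℓ hℓ k hk]
    have : ¬ ((k:ℤ)) = (-1:ℤ) := by omega
    simp [this]
  · rw [innerX_symm, case_zk ℓ hℓ k hk]
    have : ¬ ((k:ℤ)) = (0:ℤ) := by omega
    simp [this]; omega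
  · rw [case_km ℓ hℓ k m hk hm]
    by_cases h : k = m
    · simp [h]
    · have : ¬ ((k:ℤ)) = ((m:ℤ)) := by exact_mod_cast h
      simp [h, this]
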